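/- Let L be a finite distributive lattice, μ a log-supermodular probability measure on L, and for each x in a finite index set C let f_x : L → ℝ≥0 be decreasing. Then ∏_{x∈C} E_μ[f_x] ≤ E_μ[∏_{x∈C} f_x], i.e., the expectation of the product of decreasing non-negative functions is at least the product of their expectations. -/

import Mathlib

open Finset

lemma fkg_antitone {L : Type} [Fintype L] [DistribLattice L]
    (μ f g : L → ℝ) (hμ0 : ∀ a, 0 ≤ μ a) (hμ1 : ∑ a, μ a = 1)
    (hlog : ∀ a b : L, μ a * μ b ≤ μ (a ⊔ b) * μ (a ⊓ b))
    (hf0 : ∀ a, 0 ≤ f a) (hg0 : ∀ a, 0 ≤ g a)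
    (hf : ∀ a b : L, a ≤ b → f b ≤ f a) (hg : ∀ a b : L, a ≤ b → g b ≤ g a) :
    (∑ a, μ a * f a) * (∑ a, μ a * g a) ≤ ∑ a, μ a * (f a * g a) := by
  have h := four_functions_theorem_univ (μ * f) (μ * g) (μ * (f * g)) μ
    (fun a ↦ mul_nonneg (hμ0 a) (hf0 a)) (fun a ↦ mul_nonneg (hμ0 a) (hg0 a))
    (fun a ↦ mul_nonneg (hμ0 a) (mul_nonneg (hf0 a) (hg0 a))) hμ0 (fun a b ↦ ?_)
  · simpa [hμ1] using h
  · simp only [Pi.mul_apply]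
    calc μ a * f a * (μ b * g b)
        = (μ a * μ b) * (f a * g b) := by ring
      _ ≤ (μ (a ⊔ b) * μ (a ⊓ b)) * (f (a ⊓ b) * g (a ⊓ b)) := by
          refine mul_le_mul (hlog a b) ?_ (mul_nonneg (hf0 a) (hg0 b))
            (mul_nonneg (hμ0 _) (hμ0 _))
          exact mul_le_mul (hf _ _ inf_le_left) (hg _ _ inf_le_right) (hg0 b) (hf0 _)
      _ = μ (a ⊓ b) * (f (a ⊓ b) * g (a ⊓ b)) * μ (a ⊔ b) := by ring

/-- FKG-type inequality: the `μ`-expectation of a product of non-negative decreasing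
functions indexed by a finite set is at least the product of their expectations. -/
theorem stmt_11 {L ι : Type} [Fintype L] [DistribLattice L]
    (μ : L → ℝ) (hμ0 : ∀ a, 0 ≤ μ a) (hμ1 : ∑ a, μ a = 1)
    (hlog : ∀ a b : L, μ a * μ b ≤ μ (a ⊔ b) * μ (a ⊓ b))
    (C : Finset ι) (f : ι → L → ℝ)
    (hf0 : ∀ x ∈ C, ∀ a, 0 ≤ f x a)
    (hfdec : ∀ x ∈ C, ∀ a b : L, a ≤ b → f x b ≤ f x a) :
    ∏ x ∈ C, (∑ a, μ a * f x a) ≤ ∑ a, μ a * ∏ x ∈ C, f x a := by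
  classical
  induction C using Finset.induction with
  | empty => simp [hμ1]
  | insert _ _ hx ih =>
    rename_i y s
    have hf0' : ∀ x ∈ s, ∀ a, 0 ≤ f x a := fun x hxs => hf0 x (mem_insert_of_mem hxs)
    have hfdec' : ∀ x ∈ s, ∀ a b : L, a ≤ b → f x b ≤ f x a :=
      fun x hxs => hfdec x (mem_insert_of_mem hxs)
    have hy0 := hf0 y (mem_insert_self y s)
    have hydec := hfdec y (mem_insert_self y s)
    rw [prod_insert hx]
    have hP0 : ∀ a, 0 ≤ ∏ x ∈ s, f x a := fun a => prod_nonneg fun x hxs => hf0' x hxs a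
    calc (∑ a, μ a * f y a) * ∏ x ∈ s, (∑ a, μ a * f x a)
        ≤ (∑ a, μ a * f y a) * (∑ a, μ a * ∏ x ∈ s, f x a) := by
          refine mul_le_mul_of_nonneg_left (ih hf0' hfdec') ?_
          exact Finset.sum_nonneg fun a _ => mul_nonneg (hμ0 a) (hy0 a)
      _ ≤ ∑ a, μ a * (f y a * ∏ x ∈ s, f x a) := by
          refine fkg_antitone μ (f y) (fun a => ∏ x ∈ s, f x a) hμ0 hμ1 hlog hy0 hP0 hydec ?_
          intro a b hab
          exact prod_le_prod (fun x hxs => hf0' x hxs b) (fun x hxs => hfdec' x hxs a b hab)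
      _ = ∑ a, μ a * ∏ x ∈ insert y s, f x a := by simp [prod_insert hx]
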